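/- Let $\{Y_i\}$ be a sequence of non-negative reals, $A_1, A_2 > 0$, $B > 1$, $0 < \mu_1 \le \mu_2$, with $Y_{i+1} \le B^i (A_1 Y_i^{1+\mu_1} + A_2 Y_i^{1+\mu_2})$ for all $i \ge 0$. Suppose $D > 0$ satisfies $Y_0 \le D (A_1 D^{\mu_1} + A_2 D^{\mu_2})^{-1/\mu_1} B^{-1/\mu_1^2} \le D$. Then $Y_i \le D$ for all $i \ge 0$, and $\lim_{i \to \infty} Y_i = 0$. -/

import Mathlib

open Real

lemma key_id (B D K μ₁ : ℝ) (hB : 0 < B) (hD : 0 < D) (hK : 0 < K) (hμ : 0 < μ₁) (i : ℕ) :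
    B ^ (i:ℝ) * (D * K ^ (-1 / μ₁) * B ^ (-1 / μ₁ ^ 2) * B ^ (-(i:ℝ) / μ₁)) ^ (1 + μ₁)
      * (K * D ^ (-μ₁))
    = D * K ^ (-1 / μ₁) * B ^ (-1 / μ₁ ^ 2) * B ^ (-((i:ℝ) + 1) / μ₁) := by
  have hμ' : μ₁ ≠ 0 := ne_of_gt hμ
  have hDe : D ^ (1 + μ₁) * D ^ (-μ₁) = D := by
    rw [← rpow_add hD]; norm_num
  have hKe : K ^ (-1 / μ₁ * (1 + μ₁)) * K = K ^ (-1 / μ₁) := by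
    nth_rewrite 2 [← rpow_one K]
    rw [← rpow_add hK]; congr 1; field_simp; ring
  have hBe : B ^ (i:ℝ) * B ^ (-1 / μ₁ ^ 2 * (1 + μ₁)) * B ^ (-(i:ℝ) / μ₁ * (1 + μ₁))
      = B ^ (-1 / μ₁ ^ 2) * B ^ (-((i:ℝ) + 1) / μ₁) := by
    rw [← rpow_add hB, ← rpow_add hB, ← rpow_add hB]; congr 1; field_simp; ring
  calc B ^ (i:ℝ) * (D * K ^ (-1 / μ₁) * B ^ (-1 / μ₁ ^ 2) * B ^ (-(i:ℝ) / μ₁)) ^ (1 + μ₁)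
      * (K * D ^ (-μ₁))
      = (D ^ (1 + μ₁) * D ^ (-μ₁)) * (K ^ (-1 / μ₁ * (1 + μ₁)) * K) *
        (B ^ (i:ℝ) * B ^ (-1 / μ₁ ^ 2 * (1 + μ₁)) * B ^ (-(i:ℝ) / μ₁ * (1 + μ₁))) := by
        rw [mul_rpow (by positivity) (by positivity), mul_rpow (by positivity) (by positivity),
          mul_rpow (by positivity) (by positivity),
          ← rpow_mul hK.le, ← rpow_mul hB.le, ← rpow_mul hB.le]
        ring
    _ = D * K ^ (-1 / μ₁) * (B ^ (-1 / μ₁ ^ 2) * B ^ (-((i:ℝ) + 1) / μ₁)) := by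
        rw [hDe, hKe, hBe]
    _ = D * K ^ (-1 / μ₁) * B ^ (-1 / μ₁ ^ 2) * B ^ (-((i:ℝ) + 1) / μ₁) := by ring

theorem stmt4 (Y : ℕ → ℝ) (A₁ A₂ B μ₁ μ₂ D : ℝ)
    (hA1 : 0 < A₁) (hA2 : 0 < A₂) (hB : 1 < B) (hμ1 : 0 < μ₁) (hμ12 : μ₁ ≤ μ₂)
    (hY : ∀ i, 0 ≤ Y i)
    (hrec : ∀ i, Y (i + 1) ≤ B ^ i * (A₁ * Y i ^ (1 + μ₁) + A₂ * Y i ^ (1 + μ₂)))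
    (hD : 0 < D)
    (h1 : Y 0 ≤ D * (A₁ * D ^ μ₁ + A₂ * D ^ μ₂) ^ (-1 / μ₁) * B ^ (-1 / μ₁ ^ 2))
    (h2 : D * (A₁ * D ^ μ₁ + A₂ * D ^ μ₂) ^ (-1 / μ₁) * B ^ (-1 / μ₁ ^ 2) ≤ D) :
    (∀ i, Y i ≤ D) ∧ Filter.Tendsto Y Filter.atTop (nhds 0) := by
  have hB0 : (0:ℝ) < B := lt_trans one_pos hB
  set K := A₁ * D ^ μ₁ + A₂ * D ^ μ₂ with hKdef
  have hK : 0 < K := by positivity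
  set E := D * K ^ (-1 / μ₁) * B ^ (-1 / μ₁ ^ 2) with hEdef
  have hE : 0 < E := by positivity
  have main : ∀ i, Y i ≤ E * B ^ (-(i:ℝ) / μ₁) := by
    intro i
    induction i with
    | zero => simpa using h1
    | succ i ih =>
      have hYiD : Y i ≤ D := by
        refine le_trans ih (le_trans ?_ h2)
        have : B ^ (-(i:ℝ) / μ₁) ≤ 1 := by
          apply rpow_le_one_of_one_le_of_nonpos hB.le
          apply div_nonpos_of_nonpos_of_nonneg <;> [simp; exact hμ1.le]
        calc E * B ^ (-(i:ℝ)/μ₁) ≤ E * 1 := mul_le_mul_of_nonneg_left this hE.le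
          _ = E := mul_one E
      rcases eq_or_lt_of_le (hY i) with h0 | h0
      · have : Y (i+1) ≤ 0 := by
          have := hrec i
          rw [← h0] at this
          simpa [zero_rpow (by positivity : (1:ℝ) + μ₁ ≠ 0),
            zero_rpow (by nlinarith : (1:ℝ) + μ₂ ≠ 0)] using this
        exact le_trans this (by positivity)
      · have step1 : Y i ^ (1 + μ₂) ≤ Y i ^ (1 + μ₁) * D ^ (μ₂ - μ₁) := by
          have : Y i ^ (1 + μ₂) = Y i ^ (1 + μ₁) * Y i ^ (μ₂ - μ₁) := by
            rw [← rpow_add h0]; ring_nf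
          rw [this]
          exact mul_le_mul_of_nonneg_left
            (rpow_le_rpow (hY i) hYiD (by linarith)) (by positivity)
        have hKD : A₁ + A₂ * D ^ (μ₂ - μ₁) = K * D ^ (-μ₁) := by
          rw [hKdef, add_mul, mul_assoc, mul_assoc, ← rpow_add hD, ← rpow_add hD]
          have e1 : μ₁ + -μ₁ = 0 := by ring
          have e2 : μ₂ + -μ₁ = μ₂ - μ₁ := by ring
          rw [e1, e2, rpow_zero, mul_one]
        have step2 : A₁ * Y i ^ (1 + μ₁) + A₂ * Y i ^ (1 + μ₂)
            ≤ Y i ^ (1 + μ₁) * (K * D ^ (-μ₁)) := by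
          rw [← hKD]
          have := mul_le_mul_of_nonneg_left step1 hA2.le
          nlinarith [rpow_pos_of_pos h0 (1 + μ₁)]
        have step3 : Y i ^ (1 + μ₁) ≤ (E * B ^ (-(i:ℝ)/μ₁)) ^ (1 + μ₁) :=
          rpow_le_rpow (hY i) ih (by positivity)
        calc Y (i+1) ≤ B ^ i * (A₁ * Y i ^ (1 + μ₁) + A₂ * Y i ^ (1 + μ₂)) := hrec i
          _ ≤ B ^ i * (Y i ^ (1 + μ₁) * (K * D ^ (-μ₁))) :=
              mul_le_mul_of_nonneg_left step2 (by positivity)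
          _ ≤ B ^ i * ((E * B ^ (-(i:ℝ)/μ₁)) ^ (1 + μ₁) * (K * D ^ (-μ₁))) := by
              apply mul_le_mul_of_nonneg_left _ (by positivity)
              exact mul_le_mul_of_nonneg_right step3 (by positivity)
          _ = E * B ^ (-((i:ℝ)+1) / μ₁) := by
              rw [← rpow_natCast B i, ← mul_assoc]
              exact key_id B D K μ₁ hB0 hD hK hμ1 i
          _ = E * B ^ (-((i+1:ℕ):ℝ) / μ₁) := by congr 2; push_cast; ring
  constructor
  · intro i
    refine le_trans (main i) (le_trans ?_ h2)
    have : B ^ (-(i:ℝ) / μ₁) ≤ 1 := by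
      apply rpow_le_one_of_one_le_of_nonpos hB.le
      apply div_nonpos_of_nonpos_of_nonneg <;> [simp; exact hμ1.le]
    calc E * B ^ (-(i:ℝ)/μ₁) ≤ E * 1 := mul_le_mul_of_nonneg_left this hE.le
      _ = E := mul_one E
  · have hr : B ^ (-1/μ₁) < 1 := by
      apply rpow_lt_one_of_one_lt_of_neg hB
      apply div_neg_of_neg_of_pos <;> [norm_num; exact hμ1]
    have hr0 : (0:ℝ) ≤ B ^ (-1/μ₁) := by positivity
    have hgeo : Filter.Tendsto (fun i : ℕ => E * (B ^ (-1/μ₁)) ^ i) Filter.atTop (nhds 0) := by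
      have := tendsto_pow_atTop_nhds_zero_of_lt_one hr0 hr
      simpa using this.const_mul E
    refine tendsto_of_tendsto_of_tendsto_of_le_of_le tendsto_const_nhds hgeo hY ?_
    intro i
    show Y i ≤ E * (B ^ (-1/μ₁ : ℝ)) ^ i
    have : (B ^ (-1/μ₁ : ℝ)) ^ i = B ^ (-(i:ℝ)/μ₁) := by
      rw [← rpow_natCast (B ^ (-1/μ₁ : ℝ)) i, ← rpow_mul hB0.le]
      congr 1; field_simp
    rw [this]
    exact main i
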